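/- arXiv:2410.22069 — 5 statements merged into one kernel-verified Lean document; each statement's English description precedes it below -/
import Mathlib

section
/- For every θ ∈ ℝ^p one has ⟨θ, −∇𝓛(θ)⟩ = L · Σ_{i=1}^m exp(−y_i f(θ, x_i)) · y_i f(θ, x_i), and consequently ⟨θ, −∇𝓛(θ)⟩ ≥ L · 𝓛(θ) · log(1/𝓛(θ)). -/
open Filter

noncomputable section

abbrev E (p : ℕ) : Type := EuclideanSpace ℝ (Fin p)

/-- `N` is a norm on `ℝ^p`. -/
def IsNormOn {p : ℕ} (N : E p → ℝ) : Prop :=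
  (∀ θ, 0 ≤ N θ) ∧ (∀ θ, N θ = 0 ↔ θ = 0) ∧
    (∀ (c : ℝ) (θ : E p), N (c • θ) = |c| * N θ) ∧
    ∀ θ θ' : E p, N (θ + θ') ≤ N θ + N θ'

/-- The dual norm `N_*(z) = sup {⟨z, v⟩ : N v ≤ 1}`. -/
def DualNorm {p : ℕ} (N : E p → ℝ) (z : E p) : ℝ :=
  sSup ((fun v => (inner ℝ z v : ℝ)) '' {v | N v ≤ 1})

/-- The exponential loss `𝓛(θ) = Σ_i exp (-(y_i f(θ, x_i)))`. -/
def ExpLoss {p d m : ℕ} (f : E p → E d → ℝ) (x : Fin m → E d) (y : Fin m → ℝ)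
    (θ : E p) : ℝ :=
  ∑ i, Real.exp (-(y i * f θ (x i)))

/-- A steepest-flow trajectory for the loss `𝓛` with respect to the norm `N`,
with derivative curve `θ'`. -/
def IsSteepestFlow {p : ℕ} (N : E p → ℝ) (𝓛 : E p → ℝ) (θ θ' : ℝ → E p) : Prop :=
  ∀ t, (0:ℝ) ≤ t → HasDerivAt θ (θ' t) t ∧
    (inner ℝ (θ' t) (gradient 𝓛 (θ t)) : ℝ) = -(DualNorm N (gradient 𝓛 (θ t))) ^ 2 ∧
    N (θ' t) = DualNorm N (gradient 𝓛 (θ t))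

/-- The soft margin `γ̃(θ) = -log 𝓛(θ) / N(θ)^L`. -/
def SoftMargin {p : ℕ} (N : E p → ℝ) (𝓛 : E p → ℝ) (L : ℝ) (θ : E p) : ℝ :=
  -Real.log (𝓛 θ) / N θ ^ L

/-- The hard margin `γ(θ) = (min_i y_i f(θ, x_i)) / N(θ)^L`. -/
def HardMargin {p d m : ℕ} (N : E p → ℝ) (f : E p → E d → ℝ) (x : Fin m → E d)
    (y : Fin m → ℝ) (L : ℝ) (θ : E p) : ℝ :=
  (⨅ i, y i * f θ (x i)) / N θ ^ L

/-- The alignment `A(t) = ⟨θ(t)/N(θ(t)), -∇𝓛(θ(t))/N_*(∇𝓛(θ(t)))⟩`. -/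
def FlowAlignment {p : ℕ} (N : E p → ℝ) (𝓛 : E p → ℝ) (θ : ℝ → E p) (t : ℝ) : ℝ :=
  inner ℝ ((N (θ t))⁻¹ • θ t) (-((DualNorm N (gradient 𝓛 (θ t)))⁻¹ • gradient 𝓛 (θ t)))

lemma euler_like' {p : ℕ} (L : ℝ) (g : E p → ℝ) (θ : E p)
    (hg : ContDiff ℝ 1 g) (hhom : ∀ c : ℝ, 0 < c → g (c • θ) = c ^ L * g θ) :
    fderiv ℝ g θ θ = L * g θ := by
  have hdiff := hg.differentiable one_ne_zero
  have hc : HasDerivAt (fun c : ℝ => c • θ) θ 1 := by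
    simpa using (hasDerivAt_id (1:ℝ)).smul_const θ
  have hfd : HasFDerivAt g (fderiv ℝ g θ) ((1:ℝ) • θ) := by
    simpa [one_smul] using (hdiff θ).hasFDerivAt
  have h1 : HasDerivAt (fun c : ℝ => g (c • θ)) (fderiv ℝ g θ θ) 1 :=
    hfd.comp_hasDerivAt (1:ℝ) hc
  have h2 : HasDerivAt (fun c : ℝ => c ^ L * g θ) (L * g θ) 1 := by
    have := (Real.hasDerivAt_rpow_const (x := (1:ℝ)) (p := L)
      (Or.inl one_ne_zero)).mul_const (g θ)
    simpa using this
  have heq : (fun c : ℝ => g (c • θ)) =ᶠ[nhds (1:ℝ)] fun c => c ^ L * g θ := by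
    filter_upwards [Ioi_mem_nhds (by norm_num : (0:ℝ) < 1)] with c hc'
    exact hhom c hc'
  exact (heq.hasDerivAt_iff.mp h1).unique h2

theorem stmt_0 {p d m : ℕ} (hp : 0 < p) (hd : 0 < d) (hm : 0 < m)
    (x : Fin m → E d) (y : Fin m → ℝ) (hy : ∀ i, y i = 1 ∨ y i = -1)
    (L : ℝ) (hL : 0 < L) (f : E p → E d → ℝ)
    (hf : ∀ x' : E d, ContDiff ℝ 1 fun θ => f θ x')
    (hhom : ∀ c : ℝ, 0 < c → ∀ (θ : E p) (x' : E d), f (c • θ) x' = c ^ L * f θ x')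
    (θ : E p) :
    (inner ℝ θ (-gradient (ExpLoss f x y) θ) : ℝ) =
      L * ∑ i, Real.exp (-(y i * f θ (x i))) * (y i * f θ (x i)) ∧
    (inner ℝ θ (-gradient (ExpLoss f x y) θ) : ℝ) ≥
      L * ExpLoss f x y θ * Real.log (1 / ExpLoss f x y θ) := by
  set D : Fin m → (E p →L[ℝ] ℝ) := fun i => fderiv ℝ (fun θ => f θ (x i)) θ with hD
  have hDi : ∀ i, HasFDerivAt (fun θ => f θ (x i)) (D i) θ := fun i =>
    (((hf (x i)).differentiable one_ne_zero) θ).hasFDerivAt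
  have hterm : ∀ i, HasFDerivAt (fun θ => Real.exp (-(y i * f θ (x i))))
      (Real.exp (-(y i * f θ (x i))) • (-(y i • D i))) θ := by
    intro i
    have h1 : HasFDerivAt (fun θ => -(y i * f θ (x i))) (-(y i • D i)) θ :=
      ((hDi i).const_mul (y i)).neg
    exact (Real.hasDerivAt_exp (-(y i * f θ (x i)))).comp_hasFDerivAt θ h1
  have hF : HasFDerivAt (ExpLoss f x y)
      (∑ i, Real.exp (-(y i * f θ (x i))) • (-(y i • D i))) θ :=
    HasFDerivAt.fun_sum (fun i _ => hterm i)
  have hgrad := hF.hasGradientAt.gradient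
  have heq : (inner ℝ θ (-gradient (ExpLoss f x y) θ) : ℝ) =
      L * ∑ i, Real.exp (-(y i * f θ (x i))) * (y i * f θ (x i)) := by
    rw [inner_neg_right, hgrad, real_inner_comm, InnerProductSpace.toDual_symm_apply]
    have heul : ∀ i, D i θ = L * f θ (x i) := fun i =>
      euler_like' L (fun θ => f θ (x i)) θ (hf (x i)) (fun c hc => hhom c hc θ (x i))
    simp only [ContinuousLinearMap.coe_sum', Finset.sum_apply, ContinuousLinearMap.coe_smul',
      Pi.smul_apply, ContinuousLinearMap.neg_apply, ContinuousLinearMap.coe_smul]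
    rw [Finset.mul_sum, ← Finset.sum_neg_distrib]
    congr 1; ext i
    simp [smul_eq_mul, heul i]
    ring
  refine ⟨heq, ?_⟩
  rw [heq]
  have : Nonempty (Fin m) := ⟨⟨0, hm⟩⟩
  have hs : 0 < ExpLoss f x y θ :=
    Finset.sum_pos (fun i _ => Real.exp_pos _) Finset.univ_nonempty
  have hle : ∀ i, Real.log (1 / ExpLoss f x y θ) ≤ y i * f θ (x i) := by
    intro i
    have h1 : Real.exp (-(y i * f θ (x i))) ≤ ExpLoss f x y θ :=
      Finset.single_le_sum (f := fun j => Real.exp (-(y j * f θ (x j))))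
        (fun j _ => (Real.exp_pos _).le) (Finset.mem_univ i)
    have h2 := Real.log_le_log (Real.exp_pos _) h1
    rw [Real.log_exp] at h2
    rw [one_div, Real.log_inv]
    linarith
  have key : ExpLoss f x y θ * Real.log (1 / ExpLoss f x y θ) ≤
      ∑ i, Real.exp (-(y i * f θ (x i))) * (y i * f θ (x i)) := by
    rw [ExpLoss, Finset.sum_mul]
    exact Finset.sum_le_sum fun i _ =>
      mul_le_mul_of_nonneg_left (hle i) (Real.exp_pos _).le
  have h3 := mul_le_mul_of_nonneg_left key hL.le
  linarith [h3]
end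
end

section
/- Let θ be a steepest-flow trajectory and t0 ≥ 0 with 𝓛(θ(t0)) < 1. Let t > t0 be such that θ(t) ≠ 0, ∇𝓛(θ(t)) ≠ 0, the function s ↦ N(θ(s)) is differentiable at t, and the function s ↦ log γ̃(θ(s)) is differentiable at t. Then (d/dt) log γ̃(θ(t)) ≥ L · N(θ'(t))² · ( 1/(L · 𝓛(θ(t)) · log(1/𝓛(θ(t)))) − 1/(N(θ(t)) · N(θ'(t))) ) ≥ 0. -/
open Filter

noncomputable section

/-! ### Auxiliary lemmas -/

theorem IsNormOn.coord_le {p : ℕ} (v : E p) (i : Fin p) : |v i| ≤ ‖v‖ := by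
  rw [EuclideanSpace.norm_eq v]
  have h1 : |v i| = Real.sqrt (‖v i‖^2) := by rw [Real.sqrt_sq_eq_abs]; simp
  rw [h1]
  exact Real.sqrt_le_sqrt <| Finset.single_le_sum (f := fun j => ‖v j‖^2)
    (fun j _ => sq_nonneg _) (Finset.mem_univ i)

theorem IsNormOn.repr {p : ℕ} (v : E p) :
    v = ∑ i, (v i) • (EuclideanSpace.single i (1:ℝ)) := by
  ext j
  rw [WithLp.ofLp_sum, Finset.sum_apply]
  simp [EuclideanSpace.single_apply, PiLp.smul_apply, Finset.sum_ite_eq]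

theorem IsNormOn.upper {p : ℕ} {N : E p → ℝ} (hN : IsNormOn N) :
    ∃ C > 0, ∀ v : E p, N v ≤ C * ‖v‖ := by
  refine ⟨(∑ i, N (EuclideanSpace.single i (1:ℝ))) + 1, by
    have h0 := Finset.sum_nonneg (fun i (_: i ∈ Finset.univ) =>
      hN.1 (EuclideanSpace.single i (1:ℝ))); linarith, fun v => ?_⟩
  calc N v = N (∑ i, (v i) • (EuclideanSpace.single i (1:ℝ))) := by rw [← IsNormOn.repr]
    _ ≤ ∑ i, N ((v i) • (EuclideanSpace.single i (1:ℝ))) :=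
        Finset.le_sum_of_subadditive N ((hN.2.1 0).mpr rfl).le hN.2.2.2 _ _
    _ ≤ ∑ i, N (EuclideanSpace.single i (1:ℝ)) * ‖v‖ := by
        refine Finset.sum_le_sum fun i _ => ?_
        rw [hN.2.2.1]
        calc |v i| * N (EuclideanSpace.single i (1:ℝ))
            ≤ ‖v‖ * N (EuclideanSpace.single i (1:ℝ)) :=
              mul_le_mul_of_nonneg_right (IsNormOn.coord_le v i) (hN.1 _)
          _ = _ := mul_comm _ _
    _ = (∑ i, N (EuclideanSpace.single i (1:ℝ))) * ‖v‖ := (Finset.sum_mul ..).symm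
    _ ≤ _ := by nlinarith [norm_nonneg v, Finset.sum_nonneg (fun i (_: i ∈ Finset.univ) =>
        hN.1 (EuclideanSpace.single i (1:ℝ)))]

theorem IsNormOn.neg {p : ℕ} {N : E p → ℝ} (hN : IsNormOn N) (v : E p) : N (-v) = N v := by
  have := hN.2.2.1 (-1) v
  simpa using this

theorem IsNormOn.continuous {p : ℕ} {N : E p → ℝ} (hN : IsNormOn N) : Continuous N := by
  obtain ⟨C, hC, hub⟩ := hN.upper
  refine Metric.continuous_iff.mpr fun a ε hε => ⟨ε / C, by positivity, fun b hb => ?_⟩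
  rw [Real.dist_eq]
  have h1 : N b - N a ≤ N (b - a) := by
    have := hN.2.2.2 (b - a) a; simp only [sub_add_cancel] at this; linarith
  have h2 : N a - N b ≤ N (b - a) := by
    have := hN.2.2.2 (a - b) b
    simp only [sub_add_cancel] at this
    have e : N (a - b) = N (b - a) := by rw [← hN.neg (b - a)]; congr 1; abel
    linarith [e ▸ this]
  have h3 : N (b - a) ≤ C * ‖b - a‖ := hub _
  have h4 : ‖b - a‖ = dist b a := (dist_eq_norm b a).symm
  have h5 : C * dist b a < ε := by
    have := mul_lt_mul_of_pos_left hb hC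
    rwa [mul_div_cancel₀ _ hC.ne'] at this
  rw [abs_sub_lt_iff]
  constructor <;> [skip; skip] <;> nlinarith [h1, h2, h3, h4, h5]

theorem IsNormOn.lower {p : ℕ} {N : E p → ℝ} (hp : 0 < p) (hN : IsNormOn N) :
    ∃ c > 0, ∀ v : E p, c * ‖v‖ ≤ N v := by
  have hsne : (Metric.sphere (0 : E p) 1).Nonempty := by
    refine ⟨EuclideanSpace.single ⟨0, hp⟩ (1:ℝ), ?_⟩
    simp [EuclideanSpace.norm_single]
  obtain ⟨v0, hv0mem, hv0min⟩ := (isCompact_sphere (0 : E p) 1).exists_isMinOn hsne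
    hN.continuous.continuousOn
  have hv0n : ‖v0‖ = 1 := by simpa using hv0mem
  have hv0 : v0 ≠ 0 := by intro h; rw [h] at hv0n; simp at hv0n
  have hc : 0 < N v0 := lt_of_le_of_ne (hN.1 v0) (fun h => hv0 ((hN.2.1 v0).mp h.symm))
  refine ⟨N v0, hc, fun v => ?_⟩
  rcases eq_or_ne v 0 with rfl | hv
  · simp [(hN.2.1 (0:E p)).mpr rfl]
  · have hvn : (0:ℝ) < ‖v‖ := norm_pos_iff.mpr hv
    have hmem : (‖v‖⁻¹ • v) ∈ Metric.sphere (0 : E p) 1 := by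
      simp [norm_smul, abs_of_pos (inv_pos.mpr hvn), inv_mul_cancel₀ hvn.ne']
    have hmin : N v0 ≤ N (‖v‖⁻¹ • v) := hv0min hmem
    have h2 : N (‖v‖⁻¹ • v) = ‖v‖⁻¹ * N v := by
      rw [hN.2.2.1, abs_of_pos (inv_pos.mpr hvn)]
    rw [h2] at hmin
    calc N v0 * ‖v‖ ≤ (‖v‖⁻¹ * N v) * ‖v‖ := mul_le_mul_of_nonneg_right hmin hvn.le
      _ = N v := by field_simp

theorem DualNorm.bddAbove {p : ℕ} {N : E p → ℝ} (hp : 0 < p) (hN : IsNormOn N) (z : E p) :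
    BddAbove ((fun v => (inner ℝ z v : ℝ)) '' {v | N v ≤ 1}) := by
  obtain ⟨c, hc, hlb⟩ := hN.lower hp
  refine ⟨‖z‖ * c⁻¹, fun r hr => ?_⟩
  obtain ⟨v, hv, rfl⟩ := hr
  have hv1 : N v ≤ 1 := hv
  have hvc : ‖v‖ ≤ c⁻¹ := by
    have h := hlb v
    have : c * ‖v‖ ≤ 1 := h.trans hv1
    calc ‖v‖ = c⁻¹ * (c * ‖v‖) := by field_simp
      _ ≤ c⁻¹ * 1 := mul_le_mul_of_nonneg_left this (inv_pos.mpr hc).le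
      _ = c⁻¹ := mul_one _
  calc (inner ℝ z v : ℝ) ≤ ‖z‖ * ‖v‖ := real_inner_le_norm z v
    _ ≤ ‖z‖ * c⁻¹ := mul_le_mul_of_nonneg_left hvc (norm_nonneg z)

theorem DualNorm.nonneg {p : ℕ} {N : E p → ℝ} (hp : 0 < p) (hN : IsNormOn N) (z : E p) :
    0 ≤ DualNorm N z := by
  have h0 : (0:ℝ) ∈ (fun v => (inner ℝ z v : ℝ)) '' {v | N v ≤ 1} :=
    ⟨0, by simp [(hN.2.1 (0:E p)).mpr rfl], by simp⟩
  exact le_csSup (DualNorm.bddAbove hp hN z) h0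

theorem DualNorm.inner_le {p : ℕ} {N : E p → ℝ} (hp : 0 < p) (hN : IsNormOn N)
    (z v : E p) : (inner ℝ z v : ℝ) ≤ DualNorm N z * N v := by
  rcases eq_or_ne v 0 with rfl | hv
  · simp [(hN.2.1 (0:E p)).mpr rfl]
  · have hNv : 0 < N v := lt_of_le_of_ne (hN.1 v) (fun h => hv ((hN.2.1 v).mp h.symm))
    have hmem : ((N v)⁻¹ • v) ∈ {v | N v ≤ 1} := by
      simp only [Set.mem_setOf_eq, hN.2.2.1, abs_of_pos (inv_pos.mpr hNv)]
      rw [inv_mul_cancel₀ hNv.ne']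
    have hle : (inner ℝ z ((N v)⁻¹ • v) : ℝ) ≤ DualNorm N z :=
      le_csSup (DualNorm.bddAbove hp hN z) ⟨_, hmem, rfl⟩
    rw [inner_smul_right] at hle
    calc (inner ℝ z v : ℝ) = ((N v)⁻¹ * inner ℝ z v) * N v := by field_simp
      _ ≤ DualNorm N z * N v := mul_le_mul_of_nonneg_right hle hNv.le

theorem DualNorm.pos {p : ℕ} {N : E p → ℝ} (hp : 0 < p) (hN : IsNormOn N)
    {z : E p} (hz : z ≠ 0) : 0 < DualNorm N z := by
  have hNz : 0 < N z := lt_of_le_of_ne (hN.1 z) (fun h => hz ((hN.2.1 z).mp h.symm))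
  have hmem : ((N z)⁻¹ • z) ∈ {v | N v ≤ 1} := by
    simp only [Set.mem_setOf_eq, hN.2.2.1, abs_of_pos (inv_pos.mpr hNz)]
    rw [inv_mul_cancel₀ hNz.ne']
  have hle : (inner ℝ z ((N z)⁻¹ • z) : ℝ) ≤ DualNorm N z :=
    le_csSup (DualNorm.bddAbove hp hN z) ⟨_, hmem, rfl⟩
  have : (0:ℝ) < inner ℝ z ((N z)⁻¹ • z) := by
    rw [real_inner_smul_right, real_inner_self_eq_norm_sq]
    have : (0:ℝ) < ‖z‖ := norm_pos_iff.mpr hz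
    positivity
  linarith

theorem ExpLoss.differentiable {p d m : ℕ} (f : E p → E d → ℝ) (x : Fin m → E d)
    (y : Fin m → ℝ) (hf : ∀ x' : E d, ContDiff ℝ 1 fun θ => f θ x') :
    Differentiable ℝ (ExpLoss f x y) := by
  unfold ExpLoss
  refine Differentiable.fun_sum fun i _ => ?_
  exact (((hf (x i)).differentiable one_ne_zero).const_mul (y i)).neg.exp

theorem ExpLoss.pos {p d m : ℕ} (hm : 0 < m) (f : E p → E d → ℝ) (x : Fin m → E d)
    (y : Fin m → ℝ) (θ : E p) : 0 < ExpLoss f x y θ := by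
  have : Nonempty (Fin m) := ⟨⟨0, hm⟩⟩
  exact Finset.sum_pos (fun i _ => Real.exp_pos _) Finset.univ_nonempty

theorem stmt_3 {p d m : ℕ} (hp : 0 < p) (hd : 0 < d) (hm : 0 < m)
    (x : Fin m → E d) (y : Fin m → ℝ) (hy : ∀ i, y i = 1 ∨ y i = -1)
    (L : ℝ) (hL : 0 < L) (f : E p → E d → ℝ)
    (hf : ∀ x' : E d, ContDiff ℝ 1 fun θ => f θ x')
    (hhom : ∀ c : ℝ, 0 < c → ∀ (θ : E p) (x' : E d), f (c • θ) x' = c ^ L * f θ x')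
    (N : E p → ℝ) (hN : IsNormOn N)
    (θ θ' : ℝ → E p) (hflow : IsSteepestFlow N (ExpLoss f x y) θ θ')
    (t0 : ℝ) (ht0 : 0 ≤ t0) (hsep : ExpLoss f x y (θ t0) < 1)
    (t : ℝ) (ht : t0 < t) (hθ0 : θ t ≠ 0)
    (hg0 : gradient (ExpLoss f x y) (θ t) ≠ 0)
    (hNdiff : DifferentiableAt ℝ (fun s => N (θ s)) t)
    (hγdiff : DifferentiableAt ℝ
      (fun s => Real.log (SoftMargin N (ExpLoss f x y) L (θ s))) t) :
    deriv (fun s => Real.log (SoftMargin N (ExpLoss f x y) L (θ s))) t ≥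
      L * (N (θ' t)) ^ 2 *
        (1 / (L * ExpLoss f x y (θ t) * Real.log (1 / ExpLoss f x y (θ t))) -
          1 / (N (θ t) * N (θ' t))) ∧
    L * (N (θ' t)) ^ 2 *
        (1 / (L * ExpLoss f x y (θ t) * Real.log (1 / ExpLoss f x y (θ t))) -
          1 / (N (θ t) * N (θ' t))) ≥ 0 := by
  have htpos : (0:ℝ) ≤ t := le_trans ht0 ht.le
  obtain ⟨hθd, hinner, hNeq⟩ := hflow t htpos
  set 𝓛f := ExpLoss f x y with h𝓛def
  have hdiff : Differentiable ℝ 𝓛f := ExpLoss.differentiable f x y hf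
  have hposL : ∀ v, 0 < 𝓛f v := fun v => ExpLoss.pos hm f x y v
  -- chain rule for the loss along the flow
  have hchain : ∀ s : ℝ, 0 ≤ s → HasDerivAt (fun u => 𝓛f (θ u))
      (-(DualNorm N (gradient 𝓛f (θ s)))^2) s := by
    intro s hs
    have hg := ((hdiff (θ s)).hasGradientAt).hasFDerivAt
    have h := hg.comp_hasDerivAt s (hflow s hs).1
    have he : (inner ℝ (gradient 𝓛f (θ s)) (θ' s) : ℝ)
        = -(DualNorm N (gradient 𝓛f (θ s)))^2 := by
      rw [real_inner_comm]; exact (hflow s hs).2.1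
    have h' : HasDerivAt (fun u => 𝓛f (θ u)) (inner ℝ (gradient 𝓛f (θ s)) (θ' s)) s := h
    rw [he] at h'; exact h'
  -- the loss is antitone on [t0, t]
  have hanti : AntitoneOn (fun u => 𝓛f (θ u)) (Set.Icc t0 t) := by
    apply antitoneOn_of_deriv_nonpos (convex_Icc t0 t)
    · exact fun s hs =>
        ((hchain s (le_trans ht0 hs.1)).differentiableAt.continuousAt).continuousWithinAt
    · intro s hs
      rw [interior_Icc] at hs
      exact ((hchain s (le_trans ht0 hs.1.le)).differentiableAt).differentiableWithinAt
    · intro s hs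
      rw [interior_Icc] at hs
      rw [(hchain s (le_trans ht0 hs.1.le)).deriv]
      exact neg_nonpos.mpr (sq_nonneg _)
  have hlt1 : 𝓛f (θ t) < 1 :=
    lt_of_le_of_lt (hanti (Set.left_mem_Icc.mpr ht.le) (Set.right_mem_Icc.mpr ht.le) ht.le) hsep
  set ℓ := 𝓛f (θ t) with hℓdef
  have hℓpos : 0 < ℓ := hposL _
  have hG : 0 < -Real.log ℓ := by
    have := Real.log_neg hℓpos hlt1; linarith
  set G := -Real.log ℓ with hGdef
  set A := gradient 𝓛f (θ t) with hAdef
  set NZ := N (θ' t) with hNZdef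
  have hD : 0 < DualNorm N A := DualNorm.pos hp hN hg0
  have hNZ : 0 < NZ := hNeq ▸ hD
  have hNNt : 0 < N (θ t) :=
    lt_of_le_of_ne (hN.1 _) (fun h => hθ0 ((hN.2.1 _).mp h.symm))
  -- Euler identity
  have hE1 : HasDerivAt (fun c : ℝ => 𝓛f (c • θ t)) (inner ℝ A (θ t) : ℝ) 1 := by
    have hsm : HasDerivAt (fun c : ℝ => c • θ t) (θ t) 1 := by
      simpa using (hasDerivAt_id (1:ℝ)).smul_const (θ t)
    have hg := ((hdiff ((1:ℝ) • θ t)).hasGradientAt).hasFDerivAt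
    have h := hg.comp_hasDerivAt 1 hsm
    rw [one_smul] at h; exact h
  have hE2 : HasDerivAt (fun c : ℝ => ∑ i, Real.exp (-(y i * (c ^ L * f (θ t) (x i)))))
      (∑ i, Real.exp (-(y i * ((1:ℝ) ^ L * f (θ t) (x i)))) *
        (-(y i * ((L * (1:ℝ) ^ (L-1)) * f (θ t) (x i))))) 1 := by
    apply HasDerivAt.fun_sum
    intro i _
    have h1 : HasDerivAt (fun c : ℝ => c ^ L) (L * (1:ℝ) ^ (L - 1)) 1 :=
      Real.hasDerivAt_rpow_const (Or.inl one_ne_zero)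
    exact (((h1.mul_const (f (θ t) (x i))).const_mul (y i)).neg).exp
  have hevent : (fun c : ℝ => 𝓛f (c • θ t))
      =ᶠ[nhds 1] (fun c : ℝ => ∑ i, Real.exp (-(y i * (c ^ L * f (θ t) (x i))))) := by
    filter_upwards [isOpen_Ioi.mem_nhds (by norm_num : (1:ℝ) ∈ Set.Ioi (0:ℝ))] with c hc
    simp only [h𝓛def, ExpLoss]
    refine Finset.sum_congr rfl fun i _ => ?_
    rw [hhom c hc]
  have hE1' : HasDerivAt (fun c : ℝ => ∑ i, Real.exp (-(y i * (c ^ L * f (θ t) (x i)))))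
      (inner ℝ A (θ t) : ℝ) 1 := hE1.congr_of_eventuallyEq hevent.symm
  have huniq : (inner ℝ A (θ t) : ℝ) = ∑ i, Real.exp (-(y i * ((1:ℝ) ^ L * f (θ t) (x i)))) *
      (-(y i * ((L * (1:ℝ) ^ (L-1)) * f (θ t) (x i)))) := hE1'.unique hE2
  set S := ∑ i, (y i * f (θ t) (x i)) * Real.exp (-(y i * f (θ t) (x i))) with hSdef
  have hAS : (inner ℝ A (θ t) : ℝ) = -(L * S) := by
    rw [huniq, hSdef, Finset.mul_sum, ← Finset.sum_neg_distrib]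
    refine Finset.sum_congr rfl fun i _ => ?_
    simp only [Real.one_rpow]
    ring
  -- S ≥ ℓ * G
  have hS : ℓ * G ≤ S := by
    have hterm : ∀ i : Fin m, G * Real.exp (-(y i * f (θ t) (x i)))
        ≤ (y i * f (θ t) (x i)) * Real.exp (-(y i * f (θ t) (x i))) := by
      intro i
      have hle : Real.exp (-(y i * f (θ t) (x i))) ≤ ℓ := by
        rw [hℓdef, h𝓛def]
        exact Finset.single_le_sum (f := fun j => Real.exp (-(y j * f (θ t) (x j))))
          (fun j _ => (Real.exp_pos _).le) (Finset.mem_univ i)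
      have hlog : -(y i * f (θ t) (x i)) ≤ Real.log ℓ := by
        have := Real.log_le_log (Real.exp_pos _) hle
        rwa [Real.log_exp] at this
      have hGa : G ≤ y i * f (θ t) (x i) := by rw [hGdef]; linarith
      exact mul_le_mul_of_nonneg_right hGa (Real.exp_pos _).le
    calc ℓ * G = G * ℓ := mul_comm _ _
      _ = ∑ i, G * Real.exp (-(y i * f (θ t) (x i))) := by
          rw [← Finset.mul_sum, hℓdef, h𝓛def, ExpLoss]
      _ ≤ S := Finset.sum_le_sum fun i _ => hterm i
  -- pairing inequality
  have hpair : L * S ≤ DualNorm N A * N (θ t) := by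
    have h1 : (inner ℝ A (-(θ t)) : ℝ) = L * S := by rw [inner_neg_right, hAS]; ring
    have h2 := DualNorm.inner_le hp hN A (-(θ t))
    rw [h1, hN.neg] at h2
    exact h2
  have hkey : L * ℓ * G ≤ N (θ t) * NZ := by
    have h1 : L * (ℓ * G) ≤ L * S := mul_le_mul_of_nonneg_left hS hL.le
    have h2 : DualNorm N A * N (θ t) = N (θ t) * NZ := by
      rw [← hNeq]; ring
    nlinarith
  -- derivative of G along the flow
  have hℓd : HasDerivAt (fun u => 𝓛f (θ u)) (-(NZ^2)) t := by
    have h := hchain t htpos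
    rw [hNeq, hAdef]
    exact h
  have hGd : HasDerivAt (fun u => -Real.log (𝓛f (θ u))) (NZ^2 / ℓ) t := by
    have h := (hℓd.log (hposL (θ t)).ne').neg
    have h' : HasDerivAt (fun u => -Real.log (𝓛f (θ u))) (-(-NZ ^ 2 / 𝓛f (θ t))) t := h
    convert h' using 1; ring
  set NN' := deriv (fun s => N (θ s)) t with hNN'def
  have hNd : HasDerivAt (fun s => N (θ s)) NN' t := hNdiff.hasDerivAt
  -- NN' ≤ NZ
  have hNN'le : NN' ≤ NZ := by
    have hsub : Set.Ioi t ⊆ ({t} : Set ℝ)ᶜ := fun s hs =>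
      Set.mem_compl_singleton_iff.mpr (ne_of_gt hs)
    have hslope : Tendsto (slope (fun s => N (θ s)) t) (nhdsWithin t (Set.Ioi t)) (nhds NN') :=
      (hasDerivAt_iff_tendsto_slope.mp hNd).mono_left (nhdsWithin_mono _ hsub)
    have hθslope : Tendsto (slope θ t) (nhdsWithin t (Set.Ioi t)) (nhds (θ' t)) :=
      (hasDerivAt_iff_tendsto_slope.mp hθd).mono_left (nhdsWithin_mono _ hsub)
    have hr : Tendsto (fun s => N (slope θ t s)) (nhdsWithin t (Set.Ioi t)) (nhds NZ) :=
      (hN.continuous.tendsto (θ' t)).comp hθslope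
    refine le_of_tendsto_of_tendsto hslope hr ?_
    rw [Filter.EventuallyLE, eventually_nhdsWithin_iff]
    filter_upwards with s hs
    have hst : 0 < s - t := sub_pos.mpr hs
    have htri : N (θ s) - N (θ t) ≤ N (θ s - θ t) := by
      have := hN.2.2.2 (θ s - θ t) (θ t)
      simp only [sub_add_cancel] at this
      linarith
    have hslope_eq : slope (fun s => N (θ s)) t s = (s - t)⁻¹ * (N (θ s) - N (θ t)) := by
      rw [slope_def_field]; field_simp
    have hslope_eq2 : slope θ t s = (s - t)⁻¹ • (θ s - θ t) := by
      simp [slope]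
    rw [hslope_eq, hslope_eq2, hN.2.2.1, abs_of_pos (inv_pos.mpr hst)]
    exact mul_le_mul_of_nonneg_left htri (inv_pos.mpr hst).le
  -- local form of the log soft margin
  have hℓcont : ContinuousAt (fun s => 𝓛f (θ s)) t := hℓd.differentiableAt.continuousAt
  have hev1 : ∀ᶠ s in nhds t, 𝓛f (θ s) < 1 := hℓcont.eventually_lt_const hlt1
  have hev2 : ∀ᶠ s in nhds t, 0 < N (θ s) := hNdiff.continuousAt.eventually_const_lt hNNt
  have heq : (fun s => Real.log (SoftMargin N 𝓛f L (θ s)))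
      =ᶠ[nhds t] (fun s => Real.log (-Real.log (𝓛f (θ s))) - L * Real.log (N (θ s))) := by
    filter_upwards [hev1, hev2] with s hs1 hs2
    have hpos' : 0 < 𝓛f (θ s) := hposL _
    have hGs : 0 < -Real.log (𝓛f (θ s)) := by
      have := Real.log_neg hpos' hs1; linarith
    rw [SoftMargin, Real.log_div hGs.ne' (Real.rpow_pos_of_pos hs2 L).ne',
      Real.log_rpow hs2]
  have hderiv_eq : deriv (fun s => Real.log (SoftMargin N 𝓛f L (θ s))) t
      = deriv (fun s => Real.log (-Real.log (𝓛f (θ s))) - L * Real.log (N (θ s))) t :=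
    Filter.EventuallyEq.deriv_eq heq
  have hrhsd : HasDerivAt (fun s => Real.log (-Real.log (𝓛f (θ s))) - L * Real.log (N (θ s)))
      ((NZ^2 / ℓ) / G - L * (NN' / N (θ t))) t := by
    have h1 : HasDerivAt (fun s => Real.log (-Real.log (𝓛f (θ s)))) ((NZ^2 / ℓ) / G) t := by
      have := hGd.log hG.ne'
      rwa [hGdef]
    have h2 : HasDerivAt (fun s => L * Real.log (N (θ s))) (L * (NN' / N (θ t))) t :=
      (hNd.log hNNt.ne').const_mul L
    exact h1.sub h2
  have hlog1ℓ : Real.log (1 / ℓ) = G := by rw [one_div, Real.log_inv, hGdef]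
  have hRHS_eq : L * NZ ^ 2 * (1 / (L * ℓ * Real.log (1 / ℓ)) - 1 / (N (θ t) * NZ))
      = NZ^2 / ℓ / G - L * (NZ / N (θ t)) := by
    rw [hlog1ℓ]
    field_simp
  constructor
  · rw [hderiv_eq, hrhsd.deriv, hRHS_eq]
    have hmono : L * (NN' / N (θ t)) ≤ L * (NZ / N (θ t)) := by gcongr
    linarith
  · rw [hlog1ℓ]
    have h1 : 0 < L * ℓ * G := by positivity
    have h2 : 1 / (N (θ t) * NZ) ≤ 1 / (L * ℓ * G) :=
      one_div_le_one_div_of_le h1 hkey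
    have h3 : 0 ≤ 1 / (L * ℓ * G) - 1 / (N (θ t) * NZ) := by linarith
    positivity
end
end

section
/- Let θ be a steepest-flow trajectory and t0 ≥ 0 with 𝓛(θ(t0)) < 1; assume θ(t) ≠ 0 for all t ≥ t0 and that s ↦ N(θ(s)) is differentiable on (t0, ∞). Then 𝓛(θ(t)) → 0 and N(θ(t)) → ∞ as t → ∞. -/
open Filter

noncomputable section

namespace SF
variable {p : ℕ} {N : E p → ℝ}

lemma N_zero (hN : IsNormOn N) : N 0 = 0 := (hN.2.1 0).mpr rfl

lemma N_pos (hN : IsNormOn N) {v : E p} (hv : v ≠ 0) : 0 < N v :=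
  lt_of_le_of_ne (hN.1 v) (fun h => hv ((hN.2.1 v).mp h.symm))

lemma N_neg (hN : IsNormOn N) (v : E p) : N (-v) = N v := by
  have := hN.2.2.1 (-1) v
  simpa using this

lemma N_sum_le (hN : IsNormOn N) (s : Finset (Fin p)) (w : Fin p → E p) :
    N (∑ i ∈ s, w i) ≤ ∑ i ∈ s, N (w i) := by
  classical
  induction s using Finset.induction_on with
  | empty => simp [N_zero hN]
  | insert _ _ hx ih =>
    rw [Finset.sum_insert hx, Finset.sum_insert hx]
    exact le_trans (hN.2.2.2 _ _) (by linarith)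

lemma N_upper (hN : IsNormOn N) : ∃ C > 0, ∀ v : E p, N v ≤ C * ‖v‖ := by
  classical
  set C : ℝ := (∑ i : Fin p, N (EuclideanSpace.single i 1)) + 1 with hC
  have hCpos : 0 < C := by
    have : (0:ℝ) ≤ ∑ i : Fin p, N (EuclideanSpace.single i 1) :=
      Finset.sum_nonneg fun i _ => hN.1 _
    linarith
  refine ⟨C, hCpos, fun v => ?_⟩
  have hdecomp : v = ∑ i : Fin p, v i • EuclideanSpace.single i (1:ℝ) := by
    simpa [EuclideanSpace.basisFun_apply, EuclideanSpace.basisFun_repr] using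
      ((EuclideanSpace.basisFun (Fin p) ℝ).sum_repr v).symm
  have h1 : N v ≤ ∑ i : Fin p, |v i| * N (EuclideanSpace.single i 1) := by
    calc N v = N (∑ i : Fin p, v i • EuclideanSpace.single i (1:ℝ)) := by rw [← hdecomp]
    _ ≤ ∑ i : Fin p, N (v i • EuclideanSpace.single i (1:ℝ)) := N_sum_le hN _ _
    _ = ∑ i : Fin p, |v i| * N (EuclideanSpace.single i 1) := by
        simp [hN.2.2.1]
  have h2 : ∀ i : Fin p, |v i| ≤ ‖v‖ := by
    intro i
    have := EuclideanSpace.norm_eq v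
    have hle : |v i| = Real.sqrt ((v i)^2) := by
      rw [Real.sqrt_sq_eq_abs]
    rw [hle, this]
    apply Real.sqrt_le_sqrt
    have : (v i)^2 ≤ ∑ j : Fin p, ‖v j‖^2 :=
      Finset.single_le_sum (f := fun j => ‖v j‖^2)
        (fun j _ => sq_nonneg _) (Finset.mem_univ i) |>.trans_eq' (by simp [sq_abs])
    simpa using this
  calc N v ≤ ∑ i : Fin p, |v i| * N (EuclideanSpace.single i 1) := h1
  _ ≤ ∑ i : Fin p, ‖v‖ * N (EuclideanSpace.single i 1) := by
      apply Finset.sum_le_sum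
      intro i _
      exact mul_le_mul_of_nonneg_right (h2 i) (hN.1 _)
  _ = (∑ i : Fin p, N (EuclideanSpace.single i 1)) * ‖v‖ := by
      rw [← Finset.mul_sum, mul_comm]
  _ ≤ C * ‖v‖ := by
      apply mul_le_mul_of_nonneg_right _ (norm_nonneg _)
      simp [hC]

lemma N_abs_sub (hN : IsNormOn N) (u v : E p) : |N u - N v| ≤ N (u - v) := by
  rw [abs_sub_le_iff]
  constructor
  · have := hN.2.2.2 v (u - v); simp at this; linarith
  · have := hN.2.2.2 u (v - u)
    simp at this
    have h2 : N (v - u) = N (u - v) := by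
      rw [← N_neg hN (v - u)]; congr 1; abel
    linarith [this, h2]

lemma N_continuous (hN : IsNormOn N) : Continuous N := by
  obtain ⟨C, hC, hup⟩ := N_upper hN
  rw [Metric.continuous_iff]
  intro u ε hε
  refine ⟨ε / C, by positivity, fun v hv => ?_⟩
  have h1 : |N v - N u| ≤ N (v - u) := N_abs_sub hN v u
  have h2 : N (v - u) ≤ C * ‖v - u‖ := hup _
  have : dist (N v) (N u) ≤ C * dist v u := by
    rw [Real.dist_eq, dist_eq_norm]; exact h1.trans h2
  calc dist (N v) (N u) ≤ C * dist v u := this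
  _ < C * (ε / C) := by exact mul_lt_mul_of_pos_left hv hC
  _ = ε := by field_simp

lemma N_lower (hp : 0 < p) (hN : IsNormOn N) : ∃ c > 0, ∀ v : E p, c * ‖v‖ ≤ N v := by
  have hne : (Metric.sphere (0 : E p) 1).Nonempty := by
    refine ⟨EuclideanSpace.single ⟨0, hp⟩ (1:ℝ), ?_⟩
    simp [EuclideanSpace.norm_single]
  obtain ⟨u, hu, humin⟩ := (isCompact_sphere (0 : E p) 1).exists_isMinOn hne
    (N_continuous hN).continuousOn
  have hu1 : ‖u‖ = 1 := by simpa using hu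
  have hupos : 0 < N u := N_pos hN (by intro h; rw [h] at hu1; simp at hu1)
  refine ⟨N u, hupos, fun v => ?_⟩
  rcases eq_or_ne v 0 with rfl | hv
  · simp [N_zero hN]
  · have hnv : (0:ℝ) < ‖v‖ := norm_pos_iff.mpr hv
    have hmem : ‖v‖⁻¹ • v ∈ Metric.sphere (0 : E p) 1 := by
      simp [norm_smul, abs_of_pos (inv_pos.mpr hnv), inv_mul_cancel₀ hnv.ne']
    have := humin hmem
    have h1 : N u ≤ N (‖v‖⁻¹ • v) := this
    rw [hN.2.2.1, abs_of_pos (inv_pos.mpr hnv)] at h1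
    calc N u * ‖v‖ ≤ (‖v‖⁻¹ * N v) * ‖v‖ := mul_le_mul_of_nonneg_right h1 (norm_nonneg _)
    _ = N v := by field_simp


lemma dual_bdd (hN : IsNormOn N) {c : ℝ} (hc : 0 < c) (hlow : ∀ v : E p, c * ‖v‖ ≤ N v)
    (z : E p) : BddAbove ((fun v => (inner ℝ z v : ℝ)) '' {v | N v ≤ 1}) := by
  refine ⟨‖z‖ * (1/c), ?_⟩
  rintro r ⟨v, hv, rfl⟩
  have h1 : ‖v‖ ≤ 1/c := by
    rw [le_div_iff₀ hc] at *
    have := hlow v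
    have hv' : N v ≤ 1 := hv
    nlinarith [hlow v]
  calc (inner ℝ z v : ℝ) ≤ ‖z‖ * ‖v‖ := real_inner_le_norm z v
  _ ≤ ‖z‖ * (1/c) := mul_le_mul_of_nonneg_left h1 (norm_nonneg _)

lemma dual_nonneg (hN : IsNormOn N) {c : ℝ} (hc : 0 < c) (hlow : ∀ v : E p, c * ‖v‖ ≤ N v)
    (z : E p) : 0 ≤ DualNorm N z := by
  have h0 : (0:ℝ) ∈ (fun v => (inner ℝ z v : ℝ)) '' {v | N v ≤ 1} :=
    ⟨0, by simp [Set.mem_setOf_eq, N_zero hN], by simp⟩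
  exact le_csSup (dual_bdd hN hc hlow z) h0

lemma inner_le_dual (hN : IsNormOn N) {c : ℝ} (hc : 0 < c) (hlow : ∀ v : E p, c * ‖v‖ ≤ N v)
    (z w : E p) : (inner ℝ z w : ℝ) ≤ DualNorm N z * N w := by
  rcases eq_or_ne w 0 with rfl | hw
  · simp [N_zero hN]
  · have hNw : 0 < N w := N_pos hN hw
    have hmem : ((N w)⁻¹ * (inner ℝ z w : ℝ)) ∈ (fun v => (inner ℝ z v : ℝ)) '' {v | N v ≤ 1} := by
      refine ⟨(N w)⁻¹ • w, ?_, ?_⟩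
      · simp only [Set.mem_setOf_eq, hN.2.2.1, abs_of_pos (inv_pos.mpr hNw)]
        rw [inv_mul_cancel₀ hNw.ne']
      · simp [inner_smul_right]
    have h1 : (N w)⁻¹ * (inner ℝ z w : ℝ) ≤ DualNorm N z :=
      le_csSup (dual_bdd hN hc hlow z) hmem
    calc (inner ℝ z w : ℝ) = N w * ((N w)⁻¹ * (inner ℝ z w : ℝ)) := by field_simp
    _ ≤ N w * DualNorm N z := mul_le_mul_of_nonneg_left h1 hNw.le
    _ = DualNorm N z * N w := mul_comm _ _


lemma gradient_inner_eq {g : E p → ℝ} (θ₀ : E p) (v : E p) :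
    (inner ℝ (gradient g θ₀) v : ℝ) = fderiv ℝ g θ₀ v := by
  rw [gradient]
  exact InnerProductSpace.toDual_symm_apply

lemma euler {d : ℕ} {L : ℝ} {f : E p → E d → ℝ}
    (hf : ∀ x' : E d, ContDiff ℝ 1 fun θ => f θ x')
    (hhom : ∀ c : ℝ, 0 < c → ∀ (θ : E p) (x' : E d), f (c • θ) x' = c ^ L * f θ x')
    (θ₀ : E p) (x' : E d) :
    fderiv ℝ (fun θ => f θ x') θ₀ θ₀ = L * f θ₀ x' := by
  have hdiff : DifferentiableAt ℝ (fun θ => f θ x') θ₀ :=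
    ((hf x').differentiable one_ne_zero).differentiableAt
  have hsmul : HasDerivAt (fun c : ℝ => c • θ₀) θ₀ 1 := by
    simpa using (hasDerivAt_id (1:ℝ)).smul_const θ₀
  have hd2 : HasFDerivAt (fun θ => f θ x') (fderiv ℝ (fun θ => f θ x') θ₀) ((1:ℝ) • θ₀) := by
    rw [one_smul]; exact hdiff.hasFDerivAt
  have h1 : HasDerivAt (fun c : ℝ => f (c • θ₀) x') (fderiv ℝ (fun θ => f θ x') θ₀ θ₀) 1 :=
    by have := hd2.comp_hasDerivAt 1 hsmul; exact this
  have h2 : HasDerivAt (fun c : ℝ => c ^ L * f θ₀ x') (L * f θ₀ x') 1 := by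
    have := (Real.hasDerivAt_rpow_const (x := 1) (p := L) (Or.inl one_ne_zero)).mul_const
      (f θ₀ x')
    simpa [Real.one_rpow] using this
  have heq : (fun c : ℝ => f (c • θ₀) x') =ᶠ[nhds 1] (fun c : ℝ => c ^ L * f θ₀ x') := by
    filter_upwards [eventually_gt_nhds (zero_lt_one)] with c hc
    exact hhom c hc θ₀ x'
  exact h1.unique (h2.congr_of_eventuallyEq heq)

lemma expLoss_hasFDerivAt {d m : ℕ} {f : E p → E d → ℝ}
    (hf : ∀ x' : E d, ContDiff ℝ 1 fun θ => f θ x')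
    (x : Fin m → E d) (y : Fin m → ℝ) (θ₀ : E p) :
    HasFDerivAt (ExpLoss f x y)
      (∑ i, (-(y i) * Real.exp (-(y i * f θ₀ (x i)))) • fderiv ℝ (fun θ => f θ (x i)) θ₀) θ₀ := by
  have key : ∀ i : Fin m, HasFDerivAt (fun θ => Real.exp (-(y i * f θ (x i))))
      ((-(y i) * Real.exp (-(y i * f θ₀ (x i)))) • fderiv ℝ (fun θ => f θ (x i)) θ₀) θ₀ := by
    intro i
    have hdi : HasFDerivAt (fun θ => f θ (x i)) (fderiv ℝ (fun θ => f θ (x i)) θ₀) θ₀ :=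
      (((hf (x i)).differentiable one_ne_zero).differentiableAt).hasFDerivAt
    have h2 : HasFDerivAt (fun θ => -(y i * f θ (x i)))
        ((-(y i)) • fderiv ℝ (fun θ => f θ (x i)) θ₀) θ₀ := by
      simpa [neg_smul] using (hdi.const_mul (y i)).fun_neg
    have h3 := h2.exp
    rw [show (-(y i) * Real.exp (-(y i * f θ₀ (x i)))) • fderiv ℝ (fun θ => f θ (x i)) θ₀
        = Real.exp (-(y i * f θ₀ (x i))) • (-(y i)) • fderiv ℝ (fun θ => f θ (x i)) θ₀ from by
      rw [smul_smul, mul_comm (Real.exp (-(y i * f θ₀ (x i)))) (-(y i))]]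
    exact h3
  have := HasFDerivAt.fun_sum (fun i (_ : i ∈ Finset.univ) => key i)
  exact this

end SF

theorem stmt_4 {p d m : ℕ} (hp : 0 < p) (hd : 0 < d) (hm : 0 < m)
    (x : Fin m → E d) (y : Fin m → ℝ) (hy : ∀ i, y i = 1 ∨ y i = -1)
    (L : ℝ) (hL : 0 < L) (f : E p → E d → ℝ)
    (hf : ∀ x' : E d, ContDiff ℝ 1 fun θ => f θ x')
    (hhom : ∀ c : ℝ, 0 < c → ∀ (θ : E p) (x' : E d), f (c • θ) x' = c ^ L * f θ x')
    (N : E p → ℝ) (hN : IsNormOn N)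
    (θ θ' : ℝ → E p) (hflow : IsSteepestFlow N (ExpLoss f x y) θ θ')
    (t0 : ℝ) (ht0 : 0 ≤ t0) (hsep : ExpLoss f x y (θ t0) < 1)
    (hθ0 : ∀ t, t0 ≤ t → θ t ≠ 0)
    (hNdiff : ∀ t ∈ Set.Ioi t0, DifferentiableAt ℝ (fun s => N (θ s)) t) :
    Tendsto (fun t => ExpLoss f x y (θ t)) atTop (nhds 0) ∧
    Tendsto (fun t => N (θ t)) atTop atTop := by
  classical
  obtain ⟨c, hcpos, hlow⟩ := SF.N_lower hp hN
  set 𝓛 : E p → ℝ := ExpLoss f x y with h𝓛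
  set g : ℝ → ℝ := fun t => 𝓛 (θ t) with hgdef
  set h : ℝ → ℝ := fun t => N (θ t) with hhdef
  set Q : ℝ → ℝ := fun t => DualNorm N (gradient 𝓛 (θ t)) with hQdef
  have hmne : Nonempty (Fin m) := ⟨⟨0, hm⟩⟩
  have hLdiff : ∀ w : E p, DifferentiableAt ℝ 𝓛 w := fun w =>
    (SF.expLoss_hasFDerivAt hf x y w).differentiableAt
  have hgpos : ∀ t, 0 < g t := by
    intro t
    exact Finset.sum_pos (fun i _ => Real.exp_pos _) Finset.univ_nonempty
  have hg' : ∀ t, 0 ≤ t → HasDerivAt g (-(Q t)^2) t := by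
    intro t ht
    obtain ⟨hθd, hinner, hNθ'⟩ := hflow t ht
    have hcomp : HasDerivAt g (fderiv ℝ 𝓛 (θ t) (θ' t)) t :=
      (hLdiff (θ t)).hasFDerivAt.comp_hasDerivAt t hθd
    have heq : fderiv ℝ 𝓛 (θ t) (θ' t) = -(Q t)^2 := by
      rw [← SF.gradient_inner_eq (θ t) (θ' t), real_inner_comm]
      exact hinner
    rwa [heq] at hcomp
  have hQ0 : ∀ t, 0 ≤ Q t := fun t => SF.dual_nonneg hN hcpos hlow _
  have hgant : AntitoneOn g (Set.Ici 0) := by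
    apply antitoneOn_of_deriv_nonpos (convex_Ici 0)
    · exact fun t ht => ((hg' t ht).continuousAt).continuousWithinAt
    · intro t ht
      rw [interior_Ici] at ht
      exact (hg' t (le_of_lt ht)).differentiableAt.differentiableWithinAt
    · intro t ht
      rw [interior_Ici] at ht
      rw [(hg' t ht.le).deriv]
      exact neg_nonpos.mpr (sq_nonneg _)
  have hhpos : ∀ t, t0 ≤ t → 0 < h t := fun t ht => SF.N_pos hN (hθ0 t ht)
  -- key inequality : L * (g t * (-log g t)) ≤ Q t * h t
  have hexp_le : ∀ (t : ℝ) (i : Fin m), Real.exp (-(y i * f (θ t) (x i))) ≤ g t := by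
    intro t i
    exact Finset.single_le_sum (f := fun i => Real.exp (-(y i * f (θ t) (x i))))
      (fun i _ => (Real.exp_pos _).le) (Finset.mem_univ i)
  have hai : ∀ (t : ℝ) (i : Fin m), -Real.log (g t) ≤ y i * f (θ t) (x i) := by
    intro t i
    have h1 : Real.log (Real.exp (-(y i * f (θ t) (x i)))) ≤ Real.log (g t) :=
      (Real.log_le_log_iff (Real.exp_pos _) (hgpos t)).mpr (hexp_le t i)
    rw [Real.log_exp] at h1
    linarith
  have hkey : ∀ t, L * (g t * (-Real.log (g t))) ≤ Q t * h t := by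
    intro t
    set w := θ t with hw
    have hfder : fderiv ℝ 𝓛 w =
        ∑ i, (-(y i) * Real.exp (-(y i * f w (x i)))) • fderiv ℝ (fun θ => f θ (x i)) w :=
      (SF.expLoss_hasFDerivAt hf x y w).fderiv
    have hgradw : (inner ℝ (gradient 𝓛 w) w : ℝ) =
        -(L * ∑ i, (y i * f w (x i)) * Real.exp (-(y i * f w (x i)))) := by
      rw [SF.gradient_inner_eq, hfder, ContinuousLinearMap.sum_apply]
      simp only [ContinuousLinearMap.smul_apply, smul_eq_mul]
      have hterm : ∀ i : Fin m, (-(y i) * Real.exp (-(y i * f w (x i)))) *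
          fderiv ℝ (fun θ => f θ (x i)) w w =
          -(L * ((y i * f w (x i)) * Real.exp (-(y i * f w (x i))))) := by
        intro i
        rw [SF.euler hf hhom w (x i)]
        ring
      rw [Finset.sum_congr rfl (fun i _ => hterm i), Finset.sum_neg_distrib, ← Finset.mul_sum]
    have h1 : (inner ℝ (gradient 𝓛 w) (-w) : ℝ) =
        L * ∑ i, (y i * f w (x i)) * Real.exp (-(y i * f w (x i))) := by
      rw [inner_neg_right, hgradw, neg_neg]
    have h2 : (inner ℝ (gradient 𝓛 w) (-w) : ℝ) ≤ Q t * N (-w) :=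
      SF.inner_le_dual hN hcpos hlow _ _
    rw [SF.N_neg hN] at h2
    have hsum : (-Real.log (g t)) * g t ≤
        ∑ i, (y i * f w (x i)) * Real.exp (-(y i * f w (x i))) := by
      have e1 : (-Real.log (g t)) * g t =
          ∑ i, (-Real.log (g t)) * Real.exp (-(y i * f w (x i))) := by
        rw [← Finset.mul_sum]
        rfl
      rw [e1]
      exact Finset.sum_le_sum fun i _ =>
        mul_le_mul_of_nonneg_right (hai t i) (Real.exp_pos _).le
    calc L * (g t * (-Real.log (g t))) = L * ((-Real.log (g t)) * g t) := by ring
    _ ≤ L * ∑ i, (y i * f w (x i)) * Real.exp (-(y i * f w (x i))) :=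
        mul_le_mul_of_nonneg_left hsum hL.le
    _ = (inner ℝ (gradient 𝓛 w) (-w) : ℝ) := h1.symm
    _ ≤ Q t * h t := h2
  -- derivative of h is bounded by Q
  have habs : ∀ t, t0 < t → |deriv h t| ≤ Q t := by
    intro t ht
    have hdt : DifferentiableAt ℝ h t := hNdiff t ht
    have ht0' : (0:ℝ) ≤ t := le_trans ht0 ht.le
    obtain ⟨hθd, _, hNθ'⟩ := hflow t ht0'
    have hslope : Tendsto (fun s => |slope h t s|) (nhdsWithin t {t}ᶜ) (nhds |deriv h t|) :=
      (hasDerivAt_iff_tendsto_slope.mp hdt.hasDerivAt).abs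
    have hslopeθ : Tendsto (fun s => N (slope θ t s)) (nhdsWithin t {t}ᶜ) (nhds (N (θ' t))) :=
      ((SF.N_continuous hN).continuousAt.tendsto).comp
        (hasDerivAt_iff_tendsto_slope.mp hθd)
    have hle : ∀ s ∈ ({t}ᶜ : Set ℝ), |slope h t s| ≤ N (slope θ t s) := by
      intro s _
      calc |slope h t s| = |(s - t)⁻¹| * |h s - h t| := by
            rw [slope, vsub_eq_sub, smul_eq_mul, abs_mul]
      _ ≤ |(s - t)⁻¹| * N (θ s - θ t) :=
          mul_le_mul_of_nonneg_left (SF.N_abs_sub hN _ _) (abs_nonneg _)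
      _ = N ((s - t)⁻¹ • (θ s - θ t)) := (hN.2.2.1 _ _).symm
      _ = N (slope θ t s) := by rw [slope, vsub_eq_sub]
    have := le_of_tendsto_of_tendsto hslope hslopeθ
      (eventually_nhdsWithin_of_forall hle)
    rwa [hNθ'] at this
  -- main claim: inf of g is 0
  have hinf : ∀ ε, 0 < ε → ∃ T, t0 ≤ T ∧ g T < ε := by
    intro ε hε
    by_contra hcon
    push_neg at hcon
    set β := -Real.log (g t0) with hβdef
    have hβ : 0 < β := by
      have := Real.log_neg (hgpos t0) hsep
      simp only [hβdef]
      linarith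
    set α := L * (ε * β) with hα
    have hαpos : 0 < α := by
      apply mul_pos hL (mul_pos hε hβ)
    have hQlow : ∀ t, t0 ≤ t → α ≤ Q t * h t := by
      intro t ht
      refine le_trans ?_ (hkey t)
      have h1 : ε ≤ g t := hcon t ht
      have h2 : g t ≤ g t0 := hgant (Set.mem_Ici.mpr ht0)
        (Set.mem_Ici.mpr (le_trans ht0 ht)) ht
      have h3 : β ≤ -Real.log (g t) := by
        have := (Real.log_le_log_iff (hgpos t) (hgpos t0)).mpr h2
        simp only [hβdef]
        linarith
      have h4 : ε * β ≤ g t * (-Real.log (g t)) :=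
        mul_le_mul h1 h3 hβ.le (hgpos t).le
      exact mul_le_mul_of_nonneg_left h4 hL.le
    have hcontθ : ∀ t, t0 ≤ t → ContinuousAt θ t := fun t ht =>
      (hflow t (le_trans ht0 ht)).1.continuousAt
    have hconth : ∀ t, t0 ≤ t → ContinuousAt h t := fun t ht =>
      (SF.N_continuous hN).continuousAt.comp (hcontθ t ht)
    set F : ℝ → ℝ := fun t => g t + α * Real.log (h t) with hFdef
    have hFant : AntitoneOn F (Set.Ici t0) := by
      apply antitoneOn_of_deriv_nonpos (convex_Ici t0)
      · apply ContinuousOn.add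
        · exact fun t ht => ((hg' t (le_trans ht0 ht)).continuousAt).continuousWithinAt
        · apply ContinuousOn.mul continuousOn_const
          apply ContinuousOn.log
          · exact fun t ht => ((hconth t ht).continuousWithinAt)
          · exact fun t ht => (hhpos t ht).ne'
      · intro t ht
        rw [interior_Ici] at ht
        have hd1 : DifferentiableAt ℝ g t := (hg' t (le_trans ht0 ht.le)).differentiableAt
        have hd2 : DifferentiableAt ℝ (fun s => Real.log (h s)) t :=
          (hNdiff t ht).log (hhpos t ht.le).ne'
        exact (hd1.add (hd2.const_mul α)).differentiableWithinAt
      · intro t ht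
        rw [interior_Ici] at ht
        have hdh : HasDerivAt h (deriv h t) t := (hNdiff t ht).hasDerivAt
        have hder : HasDerivAt F (-(Q t)^2 + α * (deriv h t / h t)) t :=
          (hg' t (le_trans ht0 ht.le)).add ((hdh.log (hhpos t ht.le).ne').const_mul α)
        rw [hder.deriv]
        have h1 := habs t ht
        have h2 := hQlow t ht.le
        have h3 := hhpos t ht.le
        have h4 := hQ0 t
        have h5 : deriv h t ≤ |deriv h t| := le_abs_self _
        have h6 : α * (deriv h t / h t) ≤ Q t ^ 2 := by
          rw [mul_div_assoc', div_le_iff₀ h3]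
          nlinarith
        linarith
    set M := Real.exp (g t0 / α + Real.log (h t0)) with hM
    have hMpos : 0 < M := Real.exp_pos _
    have hMle : ∀ t, t0 ≤ t → h t ≤ M := by
      intro t ht
      have h1 : F t ≤ F t0 := hFant (Set.mem_Ici.mpr le_rfl) (Set.mem_Ici.mpr ht) ht
      have h2 : 0 < g t := hgpos t
      have h3 : α * Real.log (h t) ≤ g t0 + α * Real.log (h t0) := by
        simp only [hFdef] at h1
        linarith
      have h4 : Real.log (h t) ≤ g t0 / α + Real.log (h t0) := by
        rw [div_add' _ _ _ hαpos.ne', le_div_iff₀ hαpos]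
        linarith
      calc h t = Real.exp (Real.log (h t)) := (Real.exp_log (hhpos t ht)).symm
      _ ≤ M := Real.exp_le_exp.mpr h4
    have hQM : ∀ t, t0 ≤ t → α / M ≤ Q t := by
      intro t ht
      rw [div_le_iff₀ hMpos]
      calc α ≤ Q t * h t := hQlow t ht
      _ ≤ Q t * M := mul_le_mul_of_nonneg_left (hMle t ht) (hQ0 t)
    set δ := (α / M)^2 with hδdef
    have hδ : 0 < δ := by positivity
    set G : ℝ → ℝ := fun t => g t + δ * (t - t0) with hGdef
    have hGant : AntitoneOn G (Set.Ici t0) := by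
      apply antitoneOn_of_deriv_nonpos (convex_Ici t0)
      · apply ContinuousOn.add
        · exact fun t ht => ((hg' t (le_trans ht0 ht)).continuousAt).continuousWithinAt
        · exact (continuousOn_const.mul (continuousOn_id.sub continuousOn_const))
      · intro t ht
        rw [interior_Ici] at ht
        have hd1 : DifferentiableAt ℝ g t := (hg' t (le_trans ht0 ht.le)).differentiableAt
        exact (hd1.add (((differentiableAt_id.sub (differentiableAt_const t0)).const_mul δ))).differentiableWithinAt
      · intro t ht
        rw [interior_Ici] at ht
        have hder : HasDerivAt G (-(Q t)^2 + δ * 1) t :=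
          (hg' t (le_trans ht0 ht.le)).add
            (((hasDerivAt_id t).sub_const t0).const_mul δ)
        rw [hder.deriv]
        have h1 := hQM t ht.le
        have h2 : δ ≤ Q t ^ 2 := by
          rw [hδdef]
          apply pow_le_pow_left₀ (by positivity) h1
        linarith
    set T := t0 + (g t0 + 1)/δ with hT
    have hTge : t0 ≤ T := by
      have h9 : 0 < (g t0 + 1)/δ := div_pos (by linarith [hgpos t0]) hδ
      rw [hT]
      linarith
    have hGT : G T ≤ G t0 := hGant (Set.mem_Ici.mpr le_rfl) (Set.mem_Ici.mpr hTge) hTge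
    have hGt0 : G t0 = g t0 := by simp [hGdef]
    have hGTval : G T = g T + (g t0 + 1) := by
      simp only [hGdef, hT, add_sub_cancel_left]
      rw [mul_comm, div_mul_cancel₀ _ hδ.ne']
    rw [hGt0, hGTval] at hGT
    linarith [hgpos T]
  have glim : Tendsto g atTop (nhds 0) := by
    rw [Metric.tendsto_atTop]
    intro ε hε
    obtain ⟨T, hT, hgT⟩ := hinf ε hε
    refine ⟨T, fun t ht => ?_⟩
    have h1 : g t ≤ g T := hgant (Set.mem_Ici.mpr (le_trans ht0 hT))
      (Set.mem_Ici.mpr (le_trans (le_trans ht0 hT) ht)) ht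
    rw [Real.dist_eq, sub_zero, abs_of_pos (hgpos t)]
    exact lt_of_le_of_lt h1 hgT
  -- Part 2 : N(θ t) → ∞
  constructor
  · exact glim
  · -- bound |f v (x i0)| on the ball of radius 1/c
    set i0 : Fin m := ⟨0, hm⟩ with hi0
    obtain ⟨v0, _, hv0⟩ := (isCompact_closedBall (0 : E p) (1/c)).exists_isMaxOn
      (Metric.nonempty_closedBall.mpr (by positivity))
      (((hf (x i0)).continuous.abs).continuousOn :
        ContinuousOn (fun v => |f v (x i0)|) (Metric.closedBall 0 (1/c)))
    set C₁ := max (|f v0 (x i0)|) 1 with hC₁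
    have hC₁pos : (0:ℝ) < C₁ := lt_of_lt_of_le zero_lt_one (le_max_right _ _)
    have hbound : ∀ t, t0 ≤ t → -Real.log (g t) ≤ C₁ * h t ^ L := by
      intro t ht
      have hht := hhpos t ht
      set v := (h t)⁻¹ • θ t with hv
      have hθt : θ t = h t • v := by
        rw [hv, smul_inv_smul₀ hht.ne']
      have hNv : N v = 1 := by
        rw [hv, hN.2.2.1, abs_of_pos (inv_pos.mpr hht)]
        exact inv_mul_cancel₀ hht.ne'
      have hvball : v ∈ Metric.closedBall (0 : E p) (1/c) := by
        rw [Metric.mem_closedBall, dist_zero_right]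
        have := hlow v
        rw [hNv] at this
        rw [le_div_iff₀ hcpos]
        linarith
      have hfv : |f v (x i0)| ≤ C₁ := le_trans (hv0 hvball) (le_max_left _ _)
      have h1 : -Real.log (g t) ≤ y i0 * f (θ t) (x i0) := hai t i0
      have h2 : y i0 * f (θ t) (x i0) ≤ |f (θ t) (x i0)| := by
        rcases hy i0 with hy1 | hy1
        · rw [hy1]; simpa using le_abs_self _
        · rw [hy1]; simpa [neg_one_mul] using neg_le_abs (f (θ t) (x i0))
      have h3 : |f (θ t) (x i0)| = h t ^ L * |f v (x i0)| := by
        rw [hθt, hhom (h t) hht v (x i0), abs_mul,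
          abs_of_pos (Real.rpow_pos_of_pos hht L)]
      have h4 : h t ^ L * |f v (x i0)| ≤ h t ^ L * C₁ :=
        mul_le_mul_of_nonneg_left hfv (Real.rpow_pos_of_pos hht L).le
      calc -Real.log (g t) ≤ y i0 * f (θ t) (x i0) := h1
      _ ≤ |f (θ t) (x i0)| := h2
      _ = h t ^ L * |f v (x i0)| := h3
      _ ≤ C₁ * h t ^ L := by rw [mul_comm] at h4 ⊢; linarith [h4]
    have hloglim : Tendsto (fun t => -Real.log (g t)) atTop atTop := by
      have h1 : Tendsto g atTop (nhdsWithin 0 (Set.Ioi 0)) :=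
        tendsto_nhdsWithin_of_tendsto_nhds_of_eventually_within _ glim
          (Eventually.of_forall fun t => hgpos t)
      have h2 : Tendsto (fun t => Real.log (g t)) atTop atBot :=
        Real.tendsto_log_nhdsGT_zero.comp h1
      exact tendsto_neg_atBot_atTop.comp h2
    rw [tendsto_atTop]
    intro b
    set b' := max b 1 with hb'
    have hb'pos : (0:ℝ) < b' := lt_of_lt_of_le zero_lt_one (le_max_right _ _)
    have hev1 : ∀ᶠ t in atTop, C₁ * b' ^ L ≤ -Real.log (g t) :=
      (tendsto_atTop.mp hloglim) (C₁ * b' ^ L)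
    filter_upwards [hev1, eventually_ge_atTop t0] with t hbig ht
    have hb2 : C₁ * b' ^ L ≤ C₁ * h t ^ L := le_trans hbig (hbound t ht)
    have hb3 : b' ^ L ≤ h t ^ L := le_of_mul_le_mul_left hb2 hC₁pos
    by_contra hcon
    push_neg at hcon
    have hcon' : h t < b' := lt_of_lt_of_le hcon (le_max_left _ _)
    have := Real.rpow_lt_rpow (hhpos t ht).le hcon' hL
    linarith
end
end

section
/- Let θ ∈ ℝ^p satisfy y_i f(θ, x_i) ≥ 1 for all i ∈ {1, …, m}. Then the vector v = −θ satisfies, for every index i with y_i f(θ, x_i) = 1, ⟨v, ∇_θ(1 − y_i f(θ, x_i))⟩ = L > 0; equivalently, ⟨θ, y_i ∇_θ f(θ, x_i)⟩ = L for every active constraint i. In particular, the Mangasarian–Fromovitz constraint qualification holds at every feasible point of the margin-maximization problem min ½N(θ)² subject to y_i f(θ, x_i) ≥ 1 for all i. -/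
open Filter

noncomputable section

open InnerProductSpace in

private theorem euler_key {p : ℕ} (yi L : ℝ) (hL : 0 < L) (F : E p → ℝ)
    (hf : ContDiff ℝ 1 F)
    (hhom : ∀ c : ℝ, 0 < c → ∀ θ : E p, F (c • θ) = c ^ L * F θ)
    (θ : E p) (hi : yi * F θ = 1) :
    (inner ℝ (-θ) (gradient (fun w => 1 - yi * F w) θ) : ℝ) = L ∧
      (inner ℝ θ (yi • gradient F θ) : ℝ) = L := by
  have hdF : DifferentiableAt ℝ F θ := hf.differentiable one_ne_zero θ
  set g := gradient F θ with hgdef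
  have hg : HasGradientAt F g θ := hdF.hasGradientAt
  have hF' := hg.hasFDerivAt
  -- Euler
  have hs : HasDerivAt (fun c : ℝ => c • θ) θ 1 := by
    simpa using (hasDerivAt_id (1:ℝ)).smul_const θ
  have h1 : HasDerivAt (fun c : ℝ => F (c • θ)) ((toDual ℝ (E p) g) θ) 1 := by
    have hF2 : HasFDerivAt F (toDual ℝ (E p) g) ((1:ℝ) • θ) := by simpa using hF'
    exact hF2.comp_hasDerivAt 1 hs
  have h2 : HasDerivAt (fun c : ℝ => c ^ L * F θ) (L * F θ) 1 := by
    have := (Real.hasDerivAt_rpow_const (p := L) (x := (1:ℝ)) (Or.inl one_ne_zero)).mul_const (F θ)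
    simpa using this
  have heq : (fun c : ℝ => F (c • θ)) =ᶠ[nhds 1] fun c => c ^ L * F θ := by
    filter_upwards [eventually_gt_nhds (by norm_num : (0:ℝ) < 1)] with c hc
    exact hhom c hc θ
  have h2' : HasDerivAt (fun c : ℝ => F (c • θ)) (L * F θ) 1 := h2.congr_of_eventuallyEq heq
  have euler : (inner ℝ g θ : ℝ) = L * F θ := by
    have := h1.unique h2'
    simpa [toDual_apply_apply] using this
  have h3 : HasFDerivAt (fun w => 1 - yi * F w) ((-yi) • (toDual ℝ (E p) g)) θ := by
    have h3' := (hasFDerivAt_const (1:ℝ) θ).sub (hF'.const_mul yi)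
    rw [zero_sub, ← neg_smul] at h3'
    exact h3'
  have h4 : HasGradientAt (fun w => 1 - yi * F w) ((-yi) • g) θ := by
    rw [hasGradientAt_iff_hasFDerivAt, map_smul]
    exact h3
  have hgrad := h4.gradient
  constructor
  · rw [hgrad]
    rw [real_inner_smul_right, inner_neg_left, real_inner_comm, euler]
    ring_nf
    nlinarith [hi]
  · rw [real_inner_smul_right, real_inner_comm, euler]
    nlinarith [hi]

theorem stmt_8 {p d m : ℕ} (hp : 0 < p) (hd : 0 < d) (hm : 0 < m)
    (x : Fin m → E d) (y : Fin m → ℝ) (hy : ∀ i, y i = 1 ∨ y i = -1)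
    (L : ℝ) (hL : 0 < L) (f : E p → E d → ℝ)
    (hf : ∀ x' : E d, ContDiff ℝ 1 fun θ => f θ x')
    (hhom : ∀ c : ℝ, 0 < c → ∀ (θ : E p) (x' : E d), f (c • θ) x' = c ^ L * f θ x')
    (θ : E p) (hfeas : ∀ i, 1 ≤ y i * f θ (x i)) :
    ∀ i, y i * f θ (x i) = 1 →
      (inner ℝ (-θ) (gradient (fun w => 1 - y i * f w (x i)) θ) : ℝ) = L ∧
      (0:ℝ) < L ∧
      (inner ℝ θ (y i • gradient (fun w => f w (x i)) θ) : ℝ) = L := by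
  intro i hi
  have h := euler_key (y i) L hL (fun w => f w (x i)) (hf (x i))
    (fun c hc θ' => hhom c hc θ' (x i)) θ hi
  exact ⟨h.1, hL, h.2⟩
end
end

section
/- Let Φ : ℝ → ℝ be a continuously differentiable bijection with Φ'(u) > 0 for all u ∈ ℝ and such that u ↦ u·Φ'(u) is nondecreasing on [0, ∞). Let θ ∈ ℝ^p satisfy 𝓛_Φ(θ) < exp(−Φ(0)), and let M ∈ ℝ be the unique real number with Φ(M) = log(1/𝓛_Φ(θ)). Then ⟨θ, −∇𝓛_Φ(θ)⟩ = L · Σ_{i=1}^m exp(−Φ(y_i f(θ, x_i))) · Φ'(y_i f(θ, x_i)) · y_i f(θ, x_i) ≥ L · 𝓛_Φ(θ) · Φ'(M) · M. -/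
open Filter

noncomputable section

/-- The Φ-loss `𝓛_Φ(θ) = Σ_i exp (-Φ (y_i f(θ, x_i)))`. -/
def PhiLoss {p d m : ℕ} (Φ : ℝ → ℝ) (f : E p → E d → ℝ) (x : Fin m → E d)
    (y : Fin m → ℝ) (θ : E p) : ℝ :=
  ∑ i, Real.exp (-Φ (y i * f θ (x i)))

/-- The Φ-soft margin `γ̃_Φ(θ) = Φ⁻¹(log (1/𝓛_Φ(θ))) / N(θ)^L`. -/
def PhiSoftMargin {p : ℕ} (N : E p → ℝ) (Φ : ℝ → ℝ) (𝓛 : E p → ℝ) (L : ℝ)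
    (θ : E p) : ℝ :=
  Function.invFun Φ (Real.log (1 / 𝓛 θ)) / N θ ^ L

theorem stmt_13 {p d m : ℕ} (hp : 0 < p) (hd : 0 < d) (hm : 0 < m)
    (x : Fin m → E d) (y : Fin m → ℝ) (hy : ∀ i, y i = 1 ∨ y i = -1)
    (L : ℝ) (hL : 0 < L) (f : E p → E d → ℝ)
    (hf : ∀ x' : E d, ContDiff ℝ 1 fun θ => f θ x')
    (hhom : ∀ c : ℝ, 0 < c → ∀ (θ : E p) (x' : E d), f (c • θ) x' = c ^ L * f θ x')
    (Φ : ℝ → ℝ) (hΦC1 : ContDiff ℝ 1 Φ) (hΦbij : Function.Bijective Φ)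
    (hΦ' : ∀ u : ℝ, 0 < deriv Φ u)
    (hΦmono : MonotoneOn (fun u => u * deriv Φ u) (Set.Ici (0:ℝ)))
    (θ : E p) (hsep : PhiLoss Φ f x y θ < Real.exp (-Φ 0))
    (M : ℝ) (hM : Φ M = Real.log (1 / PhiLoss Φ f x y θ)) :
    (inner ℝ θ (-gradient (PhiLoss Φ f x y) θ) : ℝ) =
      L * ∑ i, Real.exp (-Φ (y i * f θ (x i))) * deriv Φ (y i * f θ (x i)) *
        (y i * f θ (x i)) ∧
    (inner ℝ θ (-gradient (PhiLoss Φ f x y) θ) : ℝ) ≥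
      L * PhiLoss Φ f x y θ * deriv Φ M * M := by
  haveI : Nonempty (Fin m) := ⟨⟨0, hm⟩⟩
  set u : Fin m → ℝ := fun i => y i * f θ (x i) with hu
  set e : Fin m → ℝ := fun i => Real.exp (-Φ (u i)) with he
  -- differentiability of the loss
  have hC : ContDiff ℝ 1 (PhiLoss Φ f x y) := by
    apply ContDiff.sum
    intro i _
    exact Real.contDiff_exp.comp ((hΦC1.comp ((contDiff_const.mul (hf (x i))))).neg)
  have hF : HasFDerivAt (PhiLoss Φ f x y) (fderiv ℝ (PhiLoss Φ f x y) θ) θ :=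
    (hC.differentiable one_ne_zero θ).hasFDerivAt
  -- derivative of s ↦ 𝓛(s • θ) at 1, two ways
  have hsmul : HasDerivAt (fun s : ℝ => s • θ) θ 1 := by
    simpa using (hasDerivAt_id (1:ℝ)).smul_const θ
  have hg : HasDerivAt (fun s : ℝ => PhiLoss Φ f x y (s • θ))
      (fderiv ℝ (PhiLoss Φ f x y) θ θ) 1 := by
    have hF' : HasFDerivAt (PhiLoss Φ f x y) (fderiv ℝ (PhiLoss Φ f x y) θ) ((1:ℝ) • θ) := by
      rw [one_smul]; exact hF
    exact hF'.comp_hasDerivAt (1:ℝ) hsmul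
  have hh : HasDerivAt (fun s : ℝ => ∑ i, Real.exp (-Φ (s ^ L * u i)))
      (∑ i, -(e i * (deriv Φ (u i) * (L * u i)))) 1 := by
    apply HasDerivAt.fun_sum
    intro i _
    have h1 : HasDerivAt (fun s : ℝ => s ^ L) L 1 := by
      simpa using Real.hasDerivAt_rpow_const (x := 1) (p := L) (Or.inl one_ne_zero)
    have h2 : HasDerivAt (fun s : ℝ => s ^ L * u i) (L * u i) 1 := by
      simpa using h1.mul_const (u i)
    have h3 : HasDerivAt Φ (deriv Φ ((1:ℝ) ^ L * u i)) ((1:ℝ) ^ L * u i) :=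
      ((hΦC1.differentiable one_ne_zero) _).hasDerivAt
    have h5 := ((h3.comp (1:ℝ) h2).neg).exp
    simp only [Function.comp_apply, Function.comp, Real.one_rpow, one_mul] at h5
    refine HasDerivAt.congr_deriv h5 ?_
    simp only [he, hu, Function.comp_apply, Pi.neg_apply, Real.one_rpow, one_mul]
    ring
  have heq : (fun s : ℝ => PhiLoss Φ f x y (s • θ))
      =ᶠ[nhds (1:ℝ)] (fun s : ℝ => ∑ i, Real.exp (-Φ (s ^ L * u i))) := by
    filter_upwards [Ioi_mem_nhds (show (0:ℝ) < 1 by norm_num)] with s hs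
    simp only [PhiLoss]
    apply Finset.sum_congr rfl
    intro i _
    rw [hhom s hs θ (x i)]
    ring_nf
    simp only [hu]; ring_nf
  have hg' : HasDerivAt (fun s : ℝ => PhiLoss Φ f x y (s • θ))
      (∑ i, -(e i * (deriv Φ (u i) * (L * u i)))) 1 := hh.congr_of_eventuallyEq heq
  have hkey : fderiv ℝ (PhiLoss Φ f x y) θ θ = ∑ i, -(e i * (deriv Φ (u i) * (L * u i))) :=
    hg.unique hg'
  have hinner : (inner ℝ θ (gradient (PhiLoss Φ f x y) θ) : ℝ)
      = fderiv ℝ (PhiLoss Φ f x y) θ θ := by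
    rw [real_inner_comm, gradient, ← InnerProductSpace.toDual_apply_apply (𝕜 := ℝ)]
    simp
  have hmain : (inner ℝ θ (-gradient (PhiLoss Φ f x y) θ) : ℝ)
      = L * ∑ i, e i * deriv Φ (u i) * u i := by
    rw [inner_neg_right, hinner, hkey, Finset.mul_sum, ← Finset.sum_neg_distrib]
    apply Finset.sum_congr rfl
    intro i _
    ring
  refine ⟨hmain, ?_⟩
  rw [hmain]
  -- positivity of the loss
  have hLpos : 0 < PhiLoss Φ f x y θ :=
    Finset.sum_pos (fun i _ => Real.exp_pos _) Finset.univ_nonempty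
  -- Φ is strictly monotone
  have hΦsm : StrictMono Φ := strictMono_of_deriv_pos hΦ'
  -- M > 0
  have hMpos : 0 < M := by
    have h1 : Real.log (PhiLoss Φ f x y θ) < -Φ 0 := by
      have := Real.log_lt_log hLpos hsep
      rwa [Real.log_exp] at this
    have h2 : Φ 0 < Φ M := by
      rw [hM, Real.log_div one_ne_zero (ne_of_gt hLpos), Real.log_one, zero_sub]
      linarith
    exact hΦsm.lt_iff_lt.mp h2
  -- exp(-Φ M) = 𝓛
  have hexpM : Real.exp (-Φ M) = PhiLoss Φ f x y θ := by
    rw [hM, Real.log_div one_ne_zero (ne_of_gt hLpos), Real.log_one, zero_sub, neg_neg,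
      Real.exp_log hLpos]
  -- each u i ≥ M
  have hui : ∀ i, M ≤ u i := by
    intro i
    have h1 : Real.exp (-Φ (u i)) ≤ PhiLoss Φ f x y θ :=
      Finset.single_le_sum (f := fun j => Real.exp (-Φ (u j)))
        (fun j _ => le_of_lt (Real.exp_pos _)) (Finset.mem_univ i)
    rw [← hexpM] at h1
    have h2 : -Φ (u i) ≤ -Φ M := Real.exp_le_exp.mp h1
    exact hΦsm.le_iff_le.mp (by linarith)
  -- per-term bound
  have hterm : ∀ i, e i * (deriv Φ M * M) ≤ e i * deriv Φ (u i) * u i := by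
    intro i
    have h1 : M * deriv Φ M ≤ u i * deriv Φ (u i) :=
      hΦmono (Set.mem_Ici.mpr hMpos.le) (Set.mem_Ici.mpr (hMpos.le.trans (hui i))) (hui i)
    have h2 : 0 < e i := Real.exp_pos _
    nlinarith
  have hsum : PhiLoss Φ f x y θ * (deriv Φ M * M) ≤ ∑ i, e i * deriv Φ (u i) * u i := by
    have h := Finset.sum_le_sum (s := Finset.univ) (fun i _ => hterm i)
    calc PhiLoss Φ f x y θ * (deriv Φ M * M) = ∑ i, e i * (deriv Φ M * M) := by
          rw [← Finset.sum_mul]; rfl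
      _ ≤ _ := h
  calc L * PhiLoss Φ f x y θ * deriv Φ M * M
      = L * (PhiLoss Φ f x y θ * (deriv Φ M * M)) := by ring
    _ ≤ L * ∑ i, e i * deriv Φ (u i) * u i := by
        exact mul_le_mul_of_nonneg_left hsum hL.le
end
end
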